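/- Let P_{XY} be a joint pmf on finite alphabets 𝒳×𝒴 with P_X(x)>0 for every x∈𝒳. Let g:[0,1]→[0,∞) satisfy: g(0)=0, g is continuous at 0, and 0 < sup_{p∈[0,1]} g(p) < ∞. Then the maximal realizable g-leakage satisfies sup over finite alphabets 𝒰 and channels P_{U|X} of log max_{y:P_Y(y)>0} [ G_g(P_{U|Y=y}) / G_g(P_U) ] = max_{(x,y):P_{XY}(x,y)>0} log[ P_{XY}(x,y) / (P_X(x)P_Y(y)) ] = D_∞(P_{XY}‖P_X×P_Y). Here P_{U|Y=y}(u)=Σ_x P_{X|Y}(x|y)P_{U|X}(u|x) and P_U(u)=Σ_x P_X(x)P_{U|X}(u|x). -/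

import Mathlib

open Finset

/-- A probability mass function on a finite type. -/
def IsPMF {α : Type*} [Fintype α] (p : α → ℝ) : Prop :=
  (∀ a, 0 ≤ p a) ∧ ∑ a, p a = 1

/-- A channel (row-stochastic kernel). -/
def IsChannel {X U : Type*} [Fintype U] (K : X → U → ℝ) : Prop :=
  ∀ x, IsPMF (K x)

/-- The pmf induced on `U` by a pmf `P` on `X` and a channel `K`. -/
noncomputable def push {X U : Type*} [Fintype X] (P : X → ℝ) (K : X → U → ℝ) : U → ℝ :=
  fun u => ∑ x, P x * K x u

/-- The maximal expected gain `G_g(R) = sup_{P̂} ∑_u R(u) g(P̂(u))`. -/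
noncomputable def maxGain {U : Type*} [Fintype U] (g : ℝ → ℝ) (R : U → ℝ) : ℝ :=
  sSup {v : ℝ | ∃ Ph : U → ℝ, IsPMF Ph ∧ v = ∑ u, R u * g (Ph u)}

/-- The Rényi divergence of order `∞`: `max_{x : P(x) > 0} log (P(x)/Q(x))`. -/
noncomputable def Dinf {X : Type*} [Fintype X] (P Q : X → ℝ) : ℝ :=
  sSup {v : ℝ | ∃ x, 0 < P x ∧ v = Real.log (P x / Q x)}

open scoped Classical

lemma pmf_le_one {U : Type*} [Fintype U] {p : U → ℝ} (hp : IsPMF p) (u : U) : p u ≤ 1 := by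
  rw [← hp.2]
  exact Finset.single_le_sum (fun i _ => hp.1 i) (Finset.mem_univ u)

lemma pmf_mem_Icc {U : Type*} [Fintype U] {p : U → ℝ} (hp : IsPMF p) (u : U) :
    p u ∈ Set.Icc (0:ℝ) 1 := ⟨hp.1 u, pmf_le_one hp u⟩

lemma pmf_nonempty {U : Type*} [Fintype U] {p : U → ℝ} (hp : IsPMF p) : Nonempty U := by
  by_contra h
  have : IsEmpty U := not_nonempty_iff.mp h
  have := hp.2
  simp [Finset.univ_eq_empty] at this

lemma isPMF_single {U : Type*} [Fintype U] (u0 : U) :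
    IsPMF (fun u => if u = u0 then (1:ℝ) else 0) := by
  constructor
  · intro a; by_cases h : a = u0 <;> simp [h]
  · simp

lemma gainSet_bddAbove {U : Type*} [Fintype U] {g : ℝ → ℝ} {s : ℝ}
    (hgs : ∀ t ∈ Set.Icc (0:ℝ) 1, g t ≤ s) {R : U → ℝ} (hR : ∀ u, 0 ≤ R u) :
    BddAbove {v : ℝ | ∃ Ph : U → ℝ, IsPMF Ph ∧ v = ∑ u, R u * g (Ph u)} := by
  refine ⟨(∑ u, R u) * s, ?_⟩
  rintro v ⟨Ph, hPh, rfl⟩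
  rw [Finset.sum_mul]
  exact Finset.sum_le_sum fun u _ =>
    mul_le_mul_of_nonneg_left (hgs _ (pmf_mem_Icc hPh u)) (hR u)

lemma maxGain_ge {U : Type*} [Fintype U] {g : ℝ → ℝ} {s : ℝ}
    (hgs : ∀ t ∈ Set.Icc (0:ℝ) 1, g t ≤ s) {R : U → ℝ} (hR : ∀ u, 0 ≤ R u)
    {Ph : U → ℝ} (hPh : IsPMF Ph) :
    ∑ u, R u * g (Ph u) ≤ maxGain g R :=
  le_csSup (gainSet_bddAbove hgs hR) ⟨Ph, hPh, rfl⟩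

lemma maxGain_nonneg {U : Type*} [Fintype U] {g : ℝ → ℝ} {s : ℝ} [Nonempty U]
    (hgnn : ∀ t ∈ Set.Icc (0:ℝ) 1, 0 ≤ g t)
    (hgs : ∀ t ∈ Set.Icc (0:ℝ) 1, g t ≤ s) {R : U → ℝ} (hR : ∀ u, 0 ≤ R u) :
    0 ≤ maxGain g R := by
  have h := maxGain_ge hgs hR (isPMF_single (Classical.arbitrary U))
  refine le_trans ?_ h
  exact Finset.sum_nonneg fun u _ => mul_nonneg (hR u)
    (hgnn _ (pmf_mem_Icc (isPMF_single (Classical.arbitrary U)) u))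

lemma maxGain_le {U : Type*} [Fintype U] {g : ℝ → ℝ} [Nonempty U] {R : U → ℝ} {B : ℝ}
    (h : ∀ Ph : U → ℝ, IsPMF Ph → ∑ u, R u * g (Ph u) ≤ B) :
    maxGain g R ≤ B := by
  refine csSup_le ⟨_, Classical.arbitrary U |> isPMF_single |> fun hp => ⟨_, hp, rfl⟩⟩ ?_
  rintro v ⟨Ph, hPh, rfl⟩
  exact h Ph hPh

lemma maxGain_scale {U : Type*} [Fintype U] {g : ℝ → ℝ} {s : ℝ} [Nonempty U]
    (hgnn : ∀ t ∈ Set.Icc (0:ℝ) 1, 0 ≤ g t)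
    (hgs : ∀ t ∈ Set.Icc (0:ℝ) 1, g t ≤ s)
    {R S : U → ℝ} (hS : ∀ u, 0 ≤ S u) {c : ℝ} (hc : 0 ≤ c)
    (h : ∀ u, R u ≤ c * S u) :
    maxGain g R ≤ c * maxGain g S := by
  refine maxGain_le fun Ph hPh => ?_
  have h1 : ∑ u, R u * g (Ph u) ≤ ∑ u, c * (S u * g (Ph u)) := by
    refine Finset.sum_le_sum fun u _ => ?_
    rw [← mul_assoc]
    exact mul_le_mul_of_nonneg_right (h u) (hgnn _ (pmf_mem_Icc hPh u))
  rw [← Finset.mul_sum] at h1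
  exact h1.trans (mul_le_mul_of_nonneg_left (maxGain_ge hgs hS hPh) hc)

lemma ratio_le {Xt U : Type*} [Fintype Xt] [Fintype U] [Nonempty Xt] {g : ℝ → ℝ} {s : ℝ}
    (hgnn : ∀ t ∈ Set.Icc (0:ℝ) 1, 0 ≤ g t)
    (hgs : ∀ t ∈ Set.Icc (0:ℝ) 1, g t ≤ s)
    {K : Xt → U → ℝ} (hK : IsChannel K)
    {W V : Xt → ℝ} (hV : ∀ x, 0 ≤ V x)
    {c : ℝ} (hc : 0 ≤ c) (h : ∀ x, W x ≤ c * V x) :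
    maxGain g (push W K) / maxGain g (push V K) ≤ c := by
  have : Nonempty U := pmf_nonempty (hK (Classical.arbitrary Xt))
  have hpV : ∀ u, 0 ≤ push V K u := fun u =>
    Finset.sum_nonneg fun x _ => mul_nonneg (hV x) ((hK x).1 u)
  rcases eq_or_lt_of_le (maxGain_nonneg hgnn hgs hpV (g := g)) with h0 | h0
  · rw [← h0, div_zero]; exact hc
  · rw [div_le_iff₀ h0]
    refine maxGain_scale hgnn hgs hpV hc fun u => ?_
    calc push W K u = ∑ x, W x * K x u := rfl
      _ ≤ ∑ x, c * (V x * K x u) := by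
          refine Finset.sum_le_sum fun x _ => ?_
          rw [← mul_assoc]
          exact mul_le_mul_of_nonneg_right (h x) ((hK x).1 u)
      _ = c * push V K u := by rw [← Finset.mul_sum]; rfl

lemma ratio_nonneg {Xt U : Type*} [Fintype Xt] [Fintype U] [Nonempty Xt] {g : ℝ → ℝ} {s : ℝ}
    (hgnn : ∀ t ∈ Set.Icc (0:ℝ) 1, 0 ≤ g t)
    (hgs : ∀ t ∈ Set.Icc (0:ℝ) 1, g t ≤ s)
    {K : Xt → U → ℝ} (hK : IsChannel K)
    {W V : Xt → ℝ} (hW : ∀ x, 0 ≤ W x) (hV : ∀ x, 0 ≤ V x) :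
    0 ≤ maxGain g (push W K) / maxGain g (push V K) := by
  have : Nonempty U := pmf_nonempty (hK (Classical.arbitrary Xt))
  have hpV : ∀ u, 0 ≤ push V K u := fun u =>
    Finset.sum_nonneg fun x _ => mul_nonneg (hV x) ((hK x).1 u)
  have hpW : ∀ u, 0 ≤ push W K u := fun u =>
    Finset.sum_nonneg fun x _ => mul_nonneg (hW x) ((hK x).1 u)
  exact div_nonneg (maxGain_nonneg hgnn hgs hpW) (maxGain_nonneg hgnn hgs hpV)

/-- the special two-block channel used for achievability -/
lemma push_special {Xt : Type*} [Fintype Xt] (xs : Xt) (M : ℕ) (hM : 0 < M)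
    (W : Xt → ℝ) (hWsum : ∑ x, W x = 1) :
    push W (fun x (u : Option (Fin M)) =>
      if x = xs then (if u = none then (1:ℝ) else 0)
      else (if u = none then 0 else (M:ℝ)⁻¹)) none = W xs ∧
    ∀ i : Fin M, push W (fun x (u : Option (Fin M)) =>
      if x = xs then (if u = none then (1:ℝ) else 0)
      else (if u = none then 0 else (M:ℝ)⁻¹)) (some i) = (1 - W xs) / M := by
  constructor
  · show (∑ x, W x * _) = W xs
    have : ∀ x : Xt, W x * (if x = xs then (if (none : Option (Fin M)) = none then (1:ℝ) else 0)
        else (if (none : Option (Fin M)) = none then 0 else (M:ℝ)⁻¹))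
        = if x = xs then W x else 0 := by
      intro x; split <;> simp
    rw [Finset.sum_congr rfl fun x _ => this x, Finset.sum_ite_eq' univ xs W]
    simp
  · intro i
    show (∑ x, W x * _) = _
    have : ∀ x : Xt, W x * (if x = xs then (if (some i : Option (Fin M)) = none then (1:ℝ) else 0)
        else (if (some i : Option (Fin M)) = none then 0 else (M:ℝ)⁻¹))
        = W x * (M:ℝ)⁻¹ - (if x = xs then W x * (M:ℝ)⁻¹ else 0) := by
      intro x; split <;> simp
    rw [Finset.sum_congr rfl fun x _ => this x, Finset.sum_sub_distrib,
      Finset.sum_ite_eq' univ xs (fun x => W x * (M:ℝ)⁻¹), ← Finset.sum_mul, hWsum]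
    simp [sub_mul, div_eq_mul_inv]

set_option maxHeartbeats 1600000 in
/-- Under mild regularity assumptions on the gain function `g`, the maximal
realizable `g`-leakage equals `D_∞(P_{XY} ‖ P_X × P_Y)`:
`sup_{U,P_{U|X}} log max_{y : P_Y(y)>0} G_g(P_{U|Y=y})/G_g(P_U)
  = max_{(x,y) : P_{XY}(x,y)>0} log (P_{XY}(x,y)/(P_X(x)P_Y(y)))`. -/
theorem stmt8 {X Y : Type} [Fintype X] [Fintype Y]
    (P : X → Y → ℝ) (hP : IsPMF (fun z : X × Y => P z.1 z.2))
    (hPX : ∀ x, 0 < ∑ y, P x y)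
    (g : ℝ → ℝ)
    (hgnn : ∀ t ∈ Set.Icc (0:ℝ) 1, 0 ≤ g t)
    (hg0 : g 0 = 0)
    (hgc : ContinuousWithinAt g (Set.Icc (0:ℝ) 1) 0)
    (hgb : BddAbove (g '' Set.Icc (0:ℝ) 1))
    (hgpos : 0 < sSup (g '' Set.Icc (0:ℝ) 1)) :
    IsLUB
      {r : ℝ | ∃ (U : Type) (iU : Fintype U) (K : X → U → ℝ),
        @IsChannel X U iU K ∧
        r = Real.log (sSup {v : ℝ | ∃ y, (0 < ∑ x, P x y) ∧
          v = @maxGain U iU g (push (fun x => P x y / ∑ x', P x' y) K) /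
              @maxGain U iU g (push (fun x => ∑ y', P x y') K)})}
      (Dinf (fun z : X × Y => P z.1 z.2)
        (fun z : X × Y => (∑ y', P z.1 y') * (∑ x', P x' z.2))) := by
  classical
  -- basic facts
  have hPnn : ∀ x y, 0 ≤ P x y := fun x y => hP.1 (x, y)
  have hsum1 : ∑ x, ∑ y, P x y = 1 := by
    have h := hP.2; rwa [Fintype.sum_prod_type] at h
  have hXne : Nonempty X := by
    by_contra h
    have : IsEmpty X := not_nonempty_iff.mp h
    simp [Finset.univ_eq_empty] at hsum1
  have hsumY : ∑ y, ∑ x, P x y = 1 := by rwa [Finset.sum_comm] at hsum1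
  have hPYnn : ∀ y, 0 ≤ ∑ x, P x y := fun y => Finset.sum_nonneg fun x _ => hPnn x y
  -- s facts
  set s : ℝ := sSup (g '' Set.Icc (0:ℝ) 1) with hsdef
  have hgs : ∀ t ∈ Set.Icc (0:ℝ) 1, g t ≤ s := fun t ht => le_csSup hgb ⟨t, ht, rfl⟩
  have hs0 : 0 < s := hgpos
  -- the Dinf set
  set D : ℝ := Dinf (fun z : X × Y => P z.1 z.2)
      (fun z : X × Y => (∑ y', P z.1 y') * (∑ x', P x' z.2)) with hDdef
  have hzex : ∃ z : X × Y, 0 < P z.1 z.2 := by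
    by_contra h
    push_neg at h
    have : ∀ z : X × Y, P z.1 z.2 = 0 := fun z => le_antisymm (h z) (hPnn z.1 z.2)
    have h2 := hP.2
    rw [Finset.sum_eq_zero (fun z _ => this z)] at h2
    norm_num at h2
  have hDfin : ({v : ℝ | ∃ z : X × Y, 0 < P z.1 z.2 ∧
      v = Real.log (P z.1 z.2 / ((∑ y', P z.1 y') * (∑ x', P x' z.2)))}).Finite := by
    have : {v : ℝ | ∃ z : X × Y, 0 < P z.1 z.2 ∧
        v = Real.log (P z.1 z.2 / ((∑ y', P z.1 y') * (∑ x', P x' z.2)))} =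
        (fun z : X × Y => Real.log (P z.1 z.2 / ((∑ y', P z.1 y') * (∑ x', P x' z.2)))) ''
          {z | 0 < P z.1 z.2} := by
      ext v; constructor
      · rintro ⟨z, hz, rfl⟩; exact ⟨z, hz, rfl⟩
      · rintro ⟨z, hz, rfl⟩; exact ⟨z, hz, rfl⟩
    rw [this]
    exact (Set.toFinite _).image _
  have hDne : {v : ℝ | ∃ z : X × Y, 0 < P z.1 z.2 ∧
      v = Real.log (P z.1 z.2 / ((∑ y', P z.1 y') * (∑ x', P x' z.2)))}.Nonempty := by
    obtain ⟨z, hz⟩ := hzex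
    exact ⟨_, z, hz, rfl⟩
  have hDb : BddAbove {v : ℝ | ∃ z : X × Y, 0 < P z.1 z.2 ∧
      v = Real.log (P z.1 z.2 / ((∑ y', P z.1 y') * (∑ x', P x' z.2)))} := hDfin.bddAbove
  have hDmem : ∃ z : X × Y, 0 < P z.1 z.2 ∧
      D = Real.log (P z.1 z.2 / ((∑ y', P z.1 y') * (∑ x', P x' z.2))) := by
    have := hDne.csSup_mem hDfin
    exact this
  have hDub : ∀ z : X × Y, 0 < P z.1 z.2 →
      Real.log (P z.1 z.2 / ((∑ y', P z.1 y') * (∑ x', P x' z.2))) ≤ D :=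
    fun z hz => le_csSup hDb ⟨z, hz, rfl⟩
  -- D is nonnegative
  have hD0 : 0 ≤ D := by
    have hQsum : ∑ z : X × Y, (∑ y', P z.1 y') * (∑ x', P x' z.2) = 1 := by
      rw [Fintype.sum_prod_type]
      have h : ∀ x : X, ∑ y, (∑ y', P x y') * (∑ x', P x' y) = (∑ y', P x y') := by
        intro x; rw [← Finset.mul_sum, hsumY, mul_one]
      rw [Finset.sum_congr rfl fun x _ => h x, hsum1]
    have hex : ∃ z : X × Y, 0 < P z.1 z.2 ∧ (∑ y', P z.1 y') * (∑ x', P x' z.2) ≤ P z.1 z.2 := by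
      by_contra h
      push_neg at h
      have hlt : ∑ z : X × Y, P z.1 z.2 < ∑ z : X × Y, (∑ y', P z.1 y') * (∑ x', P x' z.2) := by
        obtain ⟨z0, hz0⟩ := hzex
        refine Finset.sum_lt_sum (fun z _ => ?_) ⟨z0, Finset.mem_univ z0, h z0 hz0⟩
        rcases eq_or_lt_of_le (hPnn z.1 z.2) with he | hp
        · rw [← he]; exact mul_nonneg (hPX z.1).le (hPYnn z.2)
        · exact (h z hp).le
      rw [hP.2, hQsum] at hlt
      norm_num at hlt
    obtain ⟨z, hz, hq⟩ := hex
    have hQpos : 0 < (∑ y', P z.1 y') * (∑ x', P x' z.2) :=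
      mul_pos (hPX z.1) (lt_of_lt_of_le hz
        (Finset.single_le_sum (fun x _ => hPnn x z.2) (Finset.mem_univ z.1)))
    refine le_trans ?_ (hDub z hz)
    exact Real.log_nonneg ((one_le_div hQpos).mpr hq)
  set C : ℝ := Real.exp D with hCdef
  have hCpos : 0 < C := Real.exp_pos D
  have hkey : ∀ x y, P x y / (∑ x', P x' y) ≤ C * ∑ y', P x y' := by
    intro x y
    rcases eq_or_lt_of_le (hPnn x y) with he | hp
    · rw [← he, zero_div]
      exact mul_nonneg hCpos.le (hPX x).le
    · have hPYy : 0 < ∑ x', P x' y :=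
        lt_of_lt_of_le hp (Finset.single_le_sum (fun i _ => hPnn i y) (Finset.mem_univ x))
      have hq : 0 < (∑ y', P x y') * (∑ x', P x' y) := mul_pos (hPX x) hPYy
      have h1 := hDub (x, y) hp
      have h2 : P x y / ((∑ y', P x y') * (∑ x', P x' y)) ≤ C := by
        have h3 := Real.exp_le_exp.mpr h1
        rwa [Real.exp_log (div_pos hp hq)] at h3
      have h4 : P x y / (∑ x', P x' y) =
          (P x y / ((∑ y', P x y') * (∑ x', P x' y))) * (∑ y', P x y') := by
        field_simp
        field_simp [(hPX x).ne']
      rw [h4]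
      exact mul_le_mul_of_nonneg_right h2 (hPX x).le
  -- converse: every element of the inner set is at most C
  have hconv : ∀ (U : Type) (iU : Fintype U) (K : X → U → ℝ), @IsChannel X U iU K →
      ∀ v ∈ {v : ℝ | ∃ y, (0 < ∑ x, P x y) ∧
        v = @maxGain U iU g (push (fun x => P x y / ∑ x', P x' y) K) /
            @maxGain U iU g (push (fun x => ∑ y', P x y') K)}, v ≤ C := by
    rintro U iU K hK v ⟨y, hy, rfl⟩
    exact ratio_le hgnn hgs hK (fun x => le_of_lt (hPX x)) hCpos.le (fun x => hkey x y)
  have hyex : ∃ y, 0 < ∑ x, P x y := by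
    by_contra h
    push_neg at h
    have : ∀ y, (∑ x, P x y) = 0 := fun y => le_antisymm (h y) (hPYnn y)
    rw [Finset.sum_eq_zero (fun y _ => this y)] at hsumY
    norm_num at hsumY
  constructor
  · -- upper bound
    rintro r ⟨U, iU, K, hK, rfl⟩
    letI := iU
    haveI : Nonempty U := pmf_nonempty (hK (Classical.arbitrary X))
    obtain ⟨y0, hy0⟩ := hyex
    set VS : Set ℝ := {v : ℝ | ∃ y, (0 < ∑ x, P x y) ∧
          v = maxGain g (push (fun x => P x y / ∑ x', P x' y) K) /
              maxGain g (push (fun x => ∑ y', P x y') K)} with hVS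
    have hub' : ∀ v ∈ VS, v ≤ C := hconv U iU K hK
    have hmem : (maxGain g (push (fun x => P x y0 / ∑ x', P x' y0) K) /
        maxGain g (push (fun x => ∑ y', P x y') K)) ∈ VS := ⟨y0, hy0, rfl⟩
    have hsle : sSup VS ≤ C := csSup_le ⟨_, hmem⟩ hub'
    have hv0 : 0 ≤ maxGain g (push (fun x => P x y0 / ∑ x', P x' y0) K) /
        maxGain g (push (fun x => ∑ y', P x y') K) :=
      ratio_nonneg hgnn hgs hK (fun x => div_nonneg (hPnn x y0) (hPYnn y0))
        (fun x => (hPX x).le)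
    have hsnn : 0 ≤ sSup VS := hv0.trans (le_csSup ⟨C, hub'⟩ hmem)
    rcases eq_or_lt_of_le hsnn with h0 | h0
    · rw [← h0, Real.log_zero]; exact hD0
    · calc Real.log (sSup VS) ≤ Real.log C := Real.log_le_log h0 hsle
        _ = D := by rw [hCdef, Real.log_exp]
  · -- least upper bound
    intro r hr
    by_contra hcon
    push_neg at hcon
    obtain ⟨zs, hzs, hzeq⟩ := hDmem
    have hPYys : 0 < ∑ x', P x' zs.2 :=
      lt_of_lt_of_le hzs (Finset.single_le_sum (fun i _ => hPnn i zs.2) (Finset.mem_univ zs.1))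
    set a : ℝ := P zs.1 zs.2 / ∑ x', P x' zs.2 with hadef
    set b : ℝ := ∑ y', P zs.1 y' with hbdef
    have ha : 0 < a := div_pos hzs hPYys
    have ha1 : a ≤ 1 := by
      rw [hadef, div_le_one hPYys]
      exact Finset.single_le_sum (fun i _ => hPnn i zs.2) (Finset.mem_univ zs.1)
    have hb : 0 < b := hPX zs.1
    have hb1 : b ≤ 1 := by
      rw [hbdef, ← hsum1]
      exact Finset.single_le_sum (fun i _ => Finset.sum_nonneg fun j _ => hPnn i j)
        (Finset.mem_univ zs.1)
    have habC : a / b = C := by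
      rw [hCdef, hzeq, Real.exp_log (div_pos hzs (mul_pos hb hPYys)), hadef, hbdef,
        div_div, mul_comm]
    set t : ℝ := Real.exp ((r + D) / 2) with htdef
    have ht : 0 < t := Real.exp_pos _
    have htlt : t < a / b := by
      rw [habC, hCdef]
      exact Real.exp_lt_exp.mpr (by linarith)
    have htb : t * b < a := (lt_div_iff₀ hb).mp htlt
    set ε : ℝ := s * (a - t * b) / (a + 2 * t + 1) with hεdef
    have hdenpos : 0 < a + 2 * t + 1 := by positivity
    have hε : 0 < ε := div_pos (mul_pos hs0 (by linarith)) hdenpos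
    have hεeq : ε * (a + 2 * t + 1) = s * (a - t * b) := div_mul_cancel₀ _ (ne_of_gt hdenpos)
    have hεs : ε < s := by nlinarith [mul_pos (mul_pos hs0 ht) hb]
    have hkey2 : t * (b * s + 2 * ε) ≤ a * (s - ε) := by nlinarith [hε.le]
    -- continuity at zero
    have hδex : ∃ δ > 0, ∀ p ∈ Set.Icc (0:ℝ) 1, p < δ → g p ≤ ε := by
      have hgc' := hgc
      rw [ContinuousWithinAt, hg0, Metric.tendsto_nhdsWithin_nhds] at hgc'
      obtain ⟨δ, hδ, H⟩ := hgc' ε hε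
      refine ⟨δ, hδ, fun p hp hpδ => ?_⟩
      have h2 := H hp (by rw [Real.dist_eq, sub_zero, abs_of_nonneg hp.1]; exact hpδ)
      rw [Real.dist_eq, sub_zero] at h2
      exact (le_abs_self _).trans h2.le
    obtain ⟨δ, hδ, Hδ⟩ := hδex
    obtain ⟨n, hn⟩ := exists_nat_gt (s / (δ * ε))
    set M : ℕ := n + 1 with hMdef
    have hMpos : 0 < (M : ℝ) := by rw [hMdef]; positivity
    have hMge : s / (δ * ε) < M := lt_of_lt_of_le hn (by exact_mod_cast Nat.le_succ n)
    have hsδM : s / (δ * M) ≤ ε := by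
      rw [div_le_iff₀ (mul_pos hδ hMpos)]
      have h2 := (div_lt_iff₀ (mul_pos hδ hε)).mp hMge
      nlinarith
    -- the channel
    set K : X → Option (Fin M) → ℝ := fun x u =>
      if x = zs.1 then (if u = none then (1:ℝ) else 0)
      else (if u = none then 0 else (M:ℝ)⁻¹) with hKdef
    have hKchan : IsChannel K := by
      intro x
      by_cases hx : x = zs.1
      · constructor
        · intro u
          rw [hKdef]; simp only [hx, if_true]
          split <;> norm_num
        · rw [hKdef]; simp [hx, Fintype.sum_option]
      · constructor
        · intro u
          rw [hKdef]; simp only [hx, if_false]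
          split
          · norm_num
          · positivity
        · rw [hKdef]
          simp only [hx, if_false]
          rw [Fintype.sum_option]
          simp [Finset.card_univ]
    -- near-optimal guess value
    obtain ⟨gv, hgvmem, hgp⟩ := exists_lt_of_lt_csSup
      ((Set.nonempty_Icc.mpr zero_le_one).image g) (show s - ε < s by linarith)
    obtain ⟨p, hpIcc, rfl⟩ := hgvmem
    set i0 : Fin M := ⟨0, Nat.succ_pos n⟩ with hi0
    set Ph0 : Option (Fin M) → ℝ := fun u =>
      if u = none then p else if u = some i0 then 1 - p else 0 with hPh0
    have hPh0pmf : IsPMF Ph0 := by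
      constructor
      · intro u
        rw [hPh0]
        dsimp only
        split
        · exact hpIcc.1
        · split
          · linarith [hpIcc.2]
          · exact le_rfl
      · rw [hPh0]
        rw [Fintype.sum_option]
        simp [Finset.sum_ite_eq']
    have key_lower : ∀ W : X → ℝ, (∀ x, 0 ≤ W x) → (∑ x, W x) = 1 →
        W zs.1 * (s - ε) ≤ maxGain g (push W K) := by
      intro W hWnn hWsum
      obtain ⟨hw0, hwi⟩ := push_special zs.1 M (Nat.succ_pos n) W hWsum
      rw [← hKdef] at hw0 hwi
      have hpnn : ∀ u, 0 ≤ push W K u := fun u =>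
        Finset.sum_nonneg fun x _ => mul_nonneg (hWnn x) ((hKchan x).1 u)
      refine le_trans ?_ (maxGain_ge hgs hpnn hPh0pmf)
      rw [Fintype.sum_option, hw0]
      have h1 : Ph0 none = p := by rw [hPh0]; simp
      have htail : 0 ≤ ∑ i, push W K (some i) * g (Ph0 (some i)) :=
        Finset.sum_nonneg fun i _ => mul_nonneg (hpnn _) (hgnn _ (pmf_mem_Icc hPh0pmf _))
      have h2 : W zs.1 * (s - ε) ≤ W zs.1 * g (Ph0 none) := by
        rw [h1]
        exact mul_le_mul_of_nonneg_left hgp.le (hWnn zs.1)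
      linarith
    have hlin : ∀ q ∈ Set.Icc (0:ℝ) 1, g q ≤ ε + (s/δ) * q := by
      intro q hq
      rcases lt_or_ge q δ with h | h
      · have h2 : 0 ≤ (s/δ) * q := mul_nonneg (div_nonneg hs0.le hδ.le) hq.1
        linarith [Hδ q hq h]
      · have h1 : g q ≤ s := hgs q hq
        have h2 : s ≤ (s/δ) * q := by
          rw [div_mul_eq_mul_div, le_div_iff₀ hδ]
          exact mul_le_mul_of_nonneg_left h hs0.le
        linarith
    have hden_le : maxGain g (push (fun x => ∑ y', P x y') K) ≤ b * s + 2 * ε := by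
      obtain ⟨hS0, hSi⟩ := push_special zs.1 M (Nat.succ_pos n) (fun x => ∑ y', P x y') hsum1
      rw [← hKdef] at hS0 hSi
      haveI : Nonempty (Option (Fin M)) := ⟨none⟩
      refine maxGain_le fun Ph hPh => ?_
      rw [Fintype.sum_option, hS0]
      have hT1 : ∑ i, Ph (some i) ≤ 1 := by
        have h2 := hPh.2
        rw [Fintype.sum_option] at h2
        have h3 := hPh.1 none
        linarith
      have hT2 : ∑ i : Fin M, g (Ph (some i)) ≤ M * ε + (s/δ) * ∑ i, Ph (some i) := by
        calc ∑ i : Fin M, g (Ph (some i)) ≤ ∑ i : Fin M, (ε + (s/δ) * Ph (some i)) :=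
              Finset.sum_le_sum fun i _ => hlin _ (pmf_mem_Icc hPh _)
          _ = M * ε + (s/δ) * ∑ i, Ph (some i) := by
              rw [Finset.sum_add_distrib, Finset.sum_const, Finset.card_univ, Fintype.card_fin,
                ← Finset.mul_sum, nsmul_eq_mul]
      have hT3 : ∑ i : Fin M, g (Ph (some i)) ≤ M * ε + s/δ := by
        have h4 : (s/δ) * ∑ i, Ph (some i) ≤ (s/δ) * 1 :=
          mul_le_mul_of_nonneg_left hT1 (div_nonneg hs0.le hδ.le)
        linarith
      have htail : ∑ i, push (fun x => ∑ y', P x y') K (some i) * g (Ph (some i))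
          ≤ (1 - b)/M * (M * ε + s/δ) := by
        have he : ∀ i : Fin M, push (fun x => ∑ y', P x y') K (some i) * g (Ph (some i))
            = (1 - b)/M * g (Ph (some i)) := fun i => by rw [hSi i]
        rw [Finset.sum_congr rfl fun i _ => he i, ← Finset.mul_sum]
        have h1b : 0 ≤ (1 - b)/M := div_nonneg (by linarith) hMpos.le
        exact mul_le_mul_of_nonneg_left hT3 h1b
      have hbterm : b * g (Ph none) ≤ b * s :=
        mul_le_mul_of_nonneg_left (hgs _ (pmf_mem_Icc hPh none)) hb.le
      have hfin : (1 - b)/M * (M * ε + s/δ) ≤ 2 * ε := by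
        have e1 : (1 - b)/(M:ℝ) * ((M:ℝ) * ε) = (1 - b) * ε := by
          rw [← mul_assoc, div_mul_cancel₀ _ (ne_of_gt hMpos)]
        have e2 : (1 - b)/(M:ℝ) * (s/δ) = (1 - b) * (s/(δ*(M:ℝ))) := by ring
        rw [mul_add, e1, e2]
        have hb1' : (1:ℝ) - b ≤ 1 := by linarith
        have hb0' : (0:ℝ) ≤ 1 - b := by linarith
        have h1 : (1 - b) * ε ≤ ε := by
          have := mul_le_mul_of_nonneg_right hb1' hε.le
          rwa [one_mul] at this
        have hq0 : (0:ℝ) ≤ s/(δ*(M:ℝ)) := div_nonneg hs0.le (mul_nonneg hδ.le hMpos.le)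
        have h2 : (1 - b) * (s/(δ*(M:ℝ))) ≤ ε := by
          have h3 := mul_le_mul_of_nonneg_right hb1' hq0
          rw [one_mul] at h3
          exact h3.trans hsδM
        linarith
      linarith
    have hnum_ge : a * (s - ε) ≤ maxGain g (push (fun x => P x zs.2 / ∑ x', P x' zs.2) K) := by
      have hW1sum : ∑ x, P x zs.2 / ∑ x', P x' zs.2 = 1 := by
        rw [← Finset.sum_div]
        exact div_self (ne_of_gt hPYys)
      exact key_lower (fun x => P x zs.2 / ∑ x', P x' zs.2)
        (fun x => div_nonneg (hPnn x zs.2) hPYys.le) hW1sum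
    have hden_pos : 0 < maxGain g (push (fun x => ∑ y', P x y') K) := by
      have h2 := key_lower (fun x => ∑ y', P x y') (fun x => (hPX x).le) hsum1
      have h3 : 0 < b * (s - ε) := mul_pos hb (by linarith)
      exact lt_of_lt_of_le h3 h2
    have hratio : t ≤ maxGain g (push (fun x => P x zs.2 / ∑ x', P x' zs.2) K) /
        maxGain g (push (fun x => ∑ y', P x y') K) := by
      have hbs : 0 < b * s + 2 * ε := by positivity
      have h1 : t ≤ a * (s - ε) / (b * s + 2 * ε) := by
        rw [le_div_iff₀ hbs]
        linarith [hkey2]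
      have h0 : 0 ≤ a * (s - ε) := mul_nonneg ha.le (by linarith)
      exact h1.trans (div_le_div₀ (le_trans h0 hnum_ge) hnum_ge hden_pos hden_le)
    set VS : Set ℝ := {v : ℝ | ∃ y, (0 < ∑ x, P x y) ∧
          v = maxGain g (push (fun x => P x y / ∑ x', P x' y) K) /
              maxGain g (push (fun x => ∑ y', P x y') K)} with hVS
    have hmemV : (maxGain g (push (fun x => P x zs.2 / ∑ x', P x' zs.2) K) /
        maxGain g (push (fun x => ∑ y', P x y') K)) ∈ VS := ⟨zs.2, hPYys, rfl⟩
    have hbddV : BddAbove VS := ⟨C, fun v hv => hconv _ _ K hKchan v hv⟩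
    have hsup_ge : t ≤ sSup VS := hratio.trans (le_csSup hbddV hmemV)
    have helem : Real.log (sSup VS) ∈ {r : ℝ | ∃ (U : Type) (iU : Fintype U) (K : X → U → ℝ),
        @IsChannel X U iU K ∧ r = Real.log (sSup {v : ℝ | ∃ y, (0 < ∑ x, P x y) ∧
          v = @maxGain U iU g (push (fun x => P x y / ∑ x', P x' y) K) /
              @maxGain U iU g (push (fun x => ∑ y', P x y') K)})} :=
      ⟨Option (Fin M), inferInstance, K, hKchan, rfl⟩
    have hler : Real.log (sSup VS) ≤ r := hr helem
    have hlog : (r + D) / 2 ≤ Real.log (sSup VS) := by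
      have h5 := Real.log_le_log ht hsup_ge
      rwa [htdef, Real.log_exp] at h5
    linarith
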